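/- If (A, f) is a partial computable injection structure (A computable, f partial computable and injective on its domain) such that ran(f) is a computable set, then the graph G_f = {(x, y) : f(x)↓ = y} is computable. -/

import Mathlib

open Nat.Partrec.Code

theorem graph_computable_of_computable_range (f : ℕ →. ℕ)
    (hf : Nat.Partrec f)
    (hinj : ∀ x y z : ℕ, z ∈ f x → z ∈ f y → x = y)
    (hran : ComputablePred fun y : ℕ => ∃ x, y ∈ f x) :
    ComputablePred fun p : ℕ × ℕ => p.2 ∈ f p.1 := by
  obtain ⟨c, hc⟩ := exists_code.mp hf
  have hf' : Partrec f := Partrec.nat_iff.mpr hf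
  -- the graph is r.e.
  have hre : REPred fun p : ℕ × ℕ => p.2 ∈ f p.1 := by
    have heq : ComputablePred fun q : (ℕ × ℕ) × ℕ => q.2 = q.1.2 := by
      refine ComputablePred.computable_iff.mpr ⟨fun q => decide (q.2 = q.1.2), ?_, ?_⟩
      · exact Primrec.to_comp (Primrec.eq.comp Primrec.snd (Primrec.snd.comp Primrec.fst)).decide
      · funext q; simp
    have h1 : Partrec fun p : ℕ × ℕ =>
        (f p.1).bind fun z => Part.assert (z = p.2) fun _ => Part.some () :=
      (hf'.comp Computable.fst).bind heq.to_re
    refine h1.of_eq fun p => ?_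
    ext u
    simp only [Part.mem_bind_iff, Part.mem_assert_iff, Part.mem_some_iff]
    constructor
    · rintro ⟨z, hz, rfl, -⟩; exact ⟨hz, trivial⟩
    · rintro ⟨h, -⟩; exact ⟨p.2, h, rfl, trivial⟩
  -- partial inverse of f
  set g : ℕ →. ℕ := fun y => Nat.rfindOpt fun n =>
    (evaln n.unpair.2 c n.unpair.1).bind fun z =>
      if z = y then some n.unpair.1 else none with hg
  have hgpr : Partrec g := by
    apply Partrec.rfindOpt
    apply Computable₂.mk
    have h1 : Primrec fun q : ℕ × ℕ => evaln q.2.unpair.2 c q.2.unpair.1 :=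
      primrec_evaln.comp ((((Primrec.snd.comp Primrec.unpair).comp Primrec.snd).pair
        (Primrec.const c)).pair ((Primrec.fst.comp Primrec.unpair).comp Primrec.snd))
    refine Primrec.to_comp ?_
    exact Primrec.option_bind h1
      (Primrec.ite (Primrec.eq.comp Primrec.snd (Primrec.fst.comp Primrec.fst))
        (Primrec.option_some.comp
          ((Primrec.fst.comp Primrec.unpair).comp (Primrec.snd.comp Primrec.fst)))
        (Primrec.const none))
  have hgmem : ∀ {y x : ℕ}, x ∈ g y → y ∈ f x := by
    intro y x hx
    obtain ⟨n, hn⟩ := Nat.rfindOpt_spec hx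
    simp only [Option.mem_def, Option.bind_eq_some_iff] at hn
    obtain ⟨z, hz, hif⟩ := hn
    by_cases h : z = y
    · subst h
      rw [if_pos rfl, Option.some_inj] at hif
      subst hif
      rw [← hc]; exact evaln_sound hz
    · simp [h] at hif
  have hgdom : ∀ y : ℕ, (g y).Dom ↔ ∃ x, y ∈ f x := by
    intro y
    rw [hg, Nat.rfindOpt_dom]
    constructor
    · rintro ⟨n, a, hn⟩
      simp only [Option.mem_def, Option.bind_eq_some_iff] at hn
      obtain ⟨z, hz, hif⟩ := hn
      by_cases h : z = y
      · subst h
        exact ⟨n.unpair.1, by rw [← hc]; exact evaln_sound hz⟩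
      · simp [h] at hif
    · rintro ⟨x, hx⟩
      rw [← hc] at hx
      obtain ⟨s, hs⟩ := evaln_complete.mp hx
      refine ⟨Nat.pair x s, x, ?_⟩
      simp only [Option.mem_def, Option.bind_eq_some_iff, Nat.unpair_pair]
      exact ⟨y, hs, by simp⟩
  -- complement is r.e.
  have hcore : REPred fun p : ℕ × ℕ => ¬ p.2 ∈ f p.1 := by
    have h1 : Partrec fun p : ℕ × ℕ =>
        Part.assert (¬ ∃ x, p.2 ∈ f x) fun _ => Part.some () :=
      (hran.not.to_re).comp (Computable.snd (α := ℕ) (β := ℕ))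
    have h2 : Partrec fun p : ℕ × ℕ =>
        (g p.2).bind fun x' => Part.assert (x' ≠ p.1) fun _ => Part.some () := by
      have hne : ComputablePred fun q : (ℕ × ℕ) × ℕ => q.2 ≠ q.1.1 := by
        refine ComputablePred.computable_iff.mpr ⟨fun q => !decide (q.2 = q.1.1), ?_, ?_⟩
        · exact Primrec.to_comp (Primrec.not.comp
            (Primrec.eq.comp Primrec.snd (Primrec.fst.comp Primrec.fst)).decide)
        · funext q; simp
      exact (hgpr.comp Computable.snd).bind hne.to_re
    obtain ⟨k, hk, hK⟩ := Partrec.merge' h1 h2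
    refine hk.of_eq fun p => ?_
    ext u
    simp only [Part.mem_assert_iff, Part.mem_some_iff]
    constructor
    · intro hu
      refine ⟨?_, trivial⟩
      intro hmem
      rcases (hK p).1 u hu with h | h
      · rw [Part.mem_assert_iff] at h
        exact h.1 ⟨p.1, hmem⟩
      · simp only [Part.mem_bind_iff, Part.mem_assert_iff] at h
        obtain ⟨x', hx', hne, -⟩ := h
        exact hne (hinj x' p.1 p.2 (hgmem hx') hmem)
    · rintro ⟨hnmem, -⟩
      have hdom : (k p).Dom := by
        rw [(hK p).2]
        by_cases hex : ∃ x, p.2 ∈ f x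
        · right
          obtain ⟨x, hx⟩ := hex
          have hgd : (g p.2).Dom := (hgdom p.2).mpr ⟨x, hx⟩
          refine Part.dom_iff_mem.mpr ⟨(), ?_⟩
          refine Part.mem_bind_iff.mpr ⟨(g p.2).get hgd, Part.get_mem hgd, ?_⟩
          refine Part.mem_assert_iff.mpr ⟨?_, Part.mem_some ()⟩
          intro heq
          apply hnmem
          rw [← heq]
          exact hgmem (Part.get_mem hgd)
        · left
          exact Part.dom_iff_mem.mpr ⟨(), Part.mem_assert_iff.mpr ⟨hex, Part.mem_some ()⟩⟩
      obtain ⟨v, hv⟩ := Part.dom_iff_mem.mp hdom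
      cases u; cases v
      exact hv
  exact ComputablePred.computable_iff_re_compl_re'.mpr ⟨hre, hcore⟩
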